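/- The combinatorial mutation of a lattice polytope is independent of the choice of the polytopes {G_h}: if {G_h} and {G′_h} both satisfy the defining sandwich condition {u ∈ 𝒱(P) : ⟨w,u⟩ = h} ⊆ G_h + (−h)F ⊆ w_h(P) for all negative heights h, then the resulting mutated polytopes coincide. -/

import Mathlib

open Set Pointwise

noncomputable section

/-- the real vector space `N_ℝ = N ⊗ ℝ` for the lattice `N ≅ ℤᵈ` -/
abbrev RVec (d : ℕ) := Fin d → ℝ

/-- the inclusion of the lattice `N = ℤᵈ` into `N_ℝ` -/
def toR {d : ℕ} (u : Fin d → ℤ) : RVec d := fun i => (u i : ℝ)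

/-- the pairing `⟨w, u⟩` of `w ∈ M = Hom(N, ℤ)` with `u ∈ N_ℝ` -/
def pairR {d : ℕ} (w : Fin d → ℤ) (u : RVec d) : ℝ := ∑ i, (w i : ℝ) * u i

/-- `P` is a lattice polytope: the convex hull of finitely many lattice points. -/
def IsLatticePolytope {d : ℕ} (P : Set (RVec d)) : Prop :=
  ∃ S : Finset (Fin d → ℤ), S.Nonempty ∧ P = convexHull ℝ (toR '' ↑S)

/-- `w ∈ M ≅ ℤᵈ` is a primitive lattice vector -/
def IsPrimitive {d : ℕ} (w : Fin d → ℤ) : Prop := Finset.univ.gcd w = 1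

/-- `w_h(P)`: the convex hull of the lattice points of `P` at height `h` with
respect to `w` -/
def heightSlice {d : ℕ} (w : Fin d → ℤ) (h : ℤ) (P : Set (RVec d)) : Set (RVec d) :=
  convexHull ℝ (toR '' {u : Fin d → ℤ | toR u ∈ P ∧ pairR w (toR u) = (h : ℝ)})

/-- `F` is a lattice polytope lying at height `0` with respect to `w`
(a candidate factor of a polytope with respect to `w`). -/
def IsFactorShape {d : ℕ} (w : Fin d → ℤ) (F : Set (RVec d)) : Prop :=
  IsLatticePolytope F ∧ ∀ x ∈ F, pairR w x = 0

/-- The family `G` witnesses that `F` is a factor of `P` with respect to `w`: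
for every negative height `h`, `G h` is a possibly empty lattice polytope satisfying
the sandwich condition `{u ∈ 𝒱(P) : ⟨w,u⟩ = h} ⊆ G h + (−h)·F ⊆ w_h(P)`,
where `𝒱(P)` is the set of vertices (extreme points) of `P`, `+` is the Minkowski
sum (with `Q + ∅ = ∅`), and `(−h)·F` is the `(−h)`-fold Minkowski sum of `F`. -/
def IsMutationWitness {d : ℕ} (w : Fin d → ℤ) (F : Set (RVec d))
    (G : ℤ → Set (RVec d)) (P : Set (RVec d)) : Prop :=
  ∀ h : ℤ, h < 0 →
    (G h = ∅ ∨ IsLatticePolytope (G h)) ∧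
    {x | x ∈ Set.extremePoints ℝ P ∧ pairR w x = (h : ℝ)} ⊆ G h + (-h : ℝ) • F ∧
    G h + (-h : ℝ) • F ⊆ heightSlice w h P

/-- the combinatorial mutation `mut_w(P, F)` of `P` given by the vector `w`, the
factor `F` and the polytopes `{G_h}`:
`mut_w(P,F) = conv( ⋃_{h<0} G_h ∪ ⋃_{h≥0} (w_h(P) + h·F) )` -/
def mutation {d : ℕ} (w : Fin d → ℤ) (F : Set (RVec d)) (G : ℤ → Set (RVec d))
    (P : Set (RVec d)) : Set (RVec d) :=
  convexHull ℝ ((⋃ (h : ℤ) (_ : h < 0), G h) ∪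
    ⋃ h : ℕ, (heightSlice w (h : ℤ) P + (h : ℝ) • F))


section Aux

variable {d : ℕ}

lemma pairR_add (w : Fin d → ℤ) (x y : RVec d) :
    pairR w (x + y) = pairR w x + pairR w y := by
  simp [pairR, mul_add, Finset.sum_add_distrib]

lemma pairR_smul (w : Fin d → ℤ) (r : ℝ) (x : RVec d) :
    pairR w (r • x) = r * pairR w x := by
  simp only [pairR, Finset.mul_sum, Pi.smul_apply, smul_eq_mul]
  exact Finset.sum_congr rfl fun i _ => by ring

lemma isLinearMap_pairR (w : Fin d → ℤ) : IsLinearMap ℝ (pairR w) :=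
  ⟨pairR_add w, fun r x => by rw [pairR_smul]; rfl⟩

lemma pairR_toR (w u : Fin d → ℤ) :
    pairR w (toR u) = ((∑ i, w i * u i : ℤ) : ℝ) := by
  simp [pairR, toR]

end Aux


section Main

variable {d : ℕ}

lemma slice_subset_hyperplane (w : Fin d → ℤ) (h : ℤ) (P : Set (RVec d)) :
    heightSlice w h P ⊆ {y | pairR w y = (h : ℝ)} :=
  convexHull_min (by rintro y ⟨u, hu, rfl⟩; exact hu.2)
    (convex_hyperplane (isLinearMap_pairR w) _)

lemma slice_subset (w : Fin d → ℤ) (h : ℤ) {P : Set (RVec d)} (hPconv : Convex ℝ P) :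
    heightSlice w h P ⊆ P :=
  convexHull_min (by rintro y ⟨u, hu, rfl⟩; exact hu.1) hPconv

lemma mutation_subset (P : Set (RVec d)) (hP : IsLatticePolytope P)
    (w : Fin d → ℤ) (F : Set (RVec d)) (hF : IsFactorShape w F)
    (G G' : ℤ → Set (RVec d)) (hG : IsMutationWitness w F G P)
    (hG' : IsMutationWitness w F G' P) :
    mutation w F G P ⊆ mutation w F G' P := by
  classical
  obtain ⟨S, hSne, hPS⟩ := hP
  obtain ⟨⟨SF, hSFne, hFS⟩, hF0⟩ := hF
  set F0 : Set (RVec d) := toR '' ↑SF with hF0def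
  have hF0fin : F0.Finite := SF.finite_toSet.image _
  have hFne : F.Nonempty := by
    obtain ⟨s, hs⟩ := hSFne
    exact ⟨toR s, hFS ▸ subset_convexHull ℝ _ ⟨s, hs, rfl⟩⟩
  have hPconv : Convex ℝ P := hPS ▸ convex_convexHull ℝ _
  have hPcomp : IsCompact P := hPS ▸ (S.finite_toSet.image toR).isCompact_convexHull ℝ
  -- integer heights of the generators of `P`
  set Tz : Finset ℤ := S.image (fun u => ∑ i, w i * u i) with hTzdef
  have hTzne : Tz.Nonempty := hSne.image _
  set hmin : ℤ := Tz.min' hTzne with hmindef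
  set hmax : ℤ := Tz.max' hTzne with hmaxdef
  have hlow : ∀ y ∈ P, (hmin : ℝ) ≤ pairR w y := by
    intro y hy
    have hsub : P ⊆ {y | (hmin : ℝ) ≤ pairR w y} := by
      rw [hPS]
      refine convexHull_min ?_ (convex_halfSpace_ge (isLinearMap_pairR w) _)
      rintro y ⟨v, hv, rfl⟩
      rw [Set.mem_setOf_eq, pairR_toR]
      exact_mod_cast Tz.min'_le _ (Finset.mem_image_of_mem _ hv)
    exact hsub hy
  have hhigh : ∀ y ∈ P, pairR w y ≤ (hmax : ℝ) := by
    intro y hy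
    have hsub : P ⊆ {y | pairR w y ≤ (hmax : ℝ)} := by
      rw [hPS]
      refine convexHull_min ?_ (convex_halfSpace_le (isLinearMap_pairR w) _)
      rintro y ⟨v, hv, rfl⟩
      rw [Set.mem_setOf_eq, pairR_toR]
      exact_mod_cast Tz.le_max' _ (Finset.mem_image_of_mem _ hv)
    exact hsub hy
  -- members of any witness family lie at their height, which is at least `hmin`
  have hGht : ∀ (Gw : ℤ → Set (RVec d)), IsMutationWitness w F Gw P →
      ∀ h : ℤ, h < 0 → ∀ x ∈ Gw h, pairR w x = (h : ℝ) ∧ hmin ≤ h := by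
    intro Gw hGw h hh x hx
    obtain ⟨f, hf⟩ := hFne
    have hz : x + (-h : ℝ) • f ∈ heightSlice w h P :=
      (hGw h hh).2.2 (Set.add_mem_add hx (Set.smul_mem_smul_set hf))
    have hzht : pairR w (x + (-h : ℝ) • f) = (h : ℝ) := slice_subset_hyperplane w h P hz
    have hxht : pairR w x = (h : ℝ) := by
      rw [pairR_add, pairR_smul, hF0 f hf, mul_zero, add_zero] at hzht
      exact hzht
    refine ⟨hxht, ?_⟩
    have hle := hlow _ (slice_subset w h hPconv hz)
    rw [hzht] at hle
    exact_mod_cast hle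
  -- lattice points of `P` form a finite set
  set A : ℤ → Set (Fin d → ℤ) :=
    fun h => {u | toR u ∈ P ∧ pairR w (toR u) = (h : ℝ)} with hAdef
  have hLPfin : {u : Fin d → ℤ | toR u ∈ P}.Finite := by
    set R : ℕ := S.sup fun s => Finset.univ.sup fun i => (s i).natAbs with hRdef
    have hsub : {u : Fin d → ℤ | toR u ∈ P} ⊆
        Set.pi Set.univ (fun _ : Fin d => Set.Icc (-(R : ℤ)) (R : ℤ)) := by
      intro u hu i _
      have hlin : IsLinearMap ℝ (fun y : RVec d => y i) :=
        ⟨fun a b => rfl, fun r a => rfl⟩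
      have hbound : ∀ s ∈ S, |(s : Fin d → ℤ) i| ≤ (R : ℤ) := by
        intro s hs
        have h1 : (s i).natAbs ≤ Finset.univ.sup fun j => (s j).natAbs :=
          Finset.le_sup (f := fun j => (s j).natAbs) (Finset.mem_univ i)
        have h2 : (Finset.univ.sup fun j => (s j).natAbs) ≤ R :=
          Finset.le_sup (f := fun s : Fin d → ℤ => Finset.univ.sup fun i => (s i).natAbs) hs
        rw [Int.abs_eq_natAbs]
        exact_mod_cast h1.trans h2
      have hup : P ⊆ {y : RVec d | y i ≤ (R : ℝ)} := by
        rw [hPS]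
        refine convexHull_min ?_ (convex_halfSpace_le hlin _)
        rintro y ⟨v, hv, rfl⟩
        have := hbound v hv
        have : (v i : ℤ) ≤ (R : ℤ) := le_trans (le_abs_self _) this
        simpa [toR] using (by exact_mod_cast this : (v i : ℝ) ≤ (R : ℝ))
      have hdown : P ⊆ {y : RVec d | -(R : ℝ) ≤ y i} := by
        rw [hPS]
        refine convexHull_min ?_ (convex_halfSpace_ge hlin _)
        rintro y ⟨v, hv, rfl⟩
        have := hbound v hv
        have : -(R : ℤ) ≤ (v i : ℤ) := neg_le_of_abs_le this
        simpa [toR] using (by exact_mod_cast this : -(R : ℝ) ≤ (v i : ℝ))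
      have h1 : (u i : ℝ) ≤ (R : ℝ) := hup hu
      have h2 : -(R : ℝ) ≤ (u i : ℝ) := hdown hu
      constructor
      · exact_mod_cast h2
      · exact_mod_cast h1
    exact (Set.Finite.pi fun _ => Set.finite_Icc _ _).subset hsub
  have hAfin : ∀ h : ℤ, (A h).Finite := fun h => hLPfin.subset fun u hu => hu.1
  have hAle : ∀ h : ℤ, (A h).Nonempty → hmin ≤ h ∧ h ≤ hmax := by
    rintro h ⟨u, hu1, hu2⟩
    constructor
    · have := hlow _ hu1; rw [hu2] at this; exact_mod_cast this
    · have := hhigh _ hu1; rw [hu2] at this; exact_mod_cast this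
  -- finite generating sets for the G' polytopes
  have hchoose : ∀ h : ℤ, h < 0 → ∃ Tf : Set (RVec d), Tf.Finite ∧ Tf ⊆ G' h ∧
      G' h ⊆ convexHull ℝ Tf := by
    intro h hh
    rcases (hG' h hh).1 with he | ⟨Sh, hShne, hGh⟩
    · exact ⟨∅, Set.finite_empty, by simp [he], by simp [he]⟩
    · exact ⟨toR '' ↑Sh, Sh.finite_toSet.image _,
        by rw [hGh]; exact subset_convexHull ℝ _, le_of_eq hGh⟩
  choose gen hgenfin hgensub hgenhull using hchoose
  -- the finite set `T`
  set T : Set (RVec d) :=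
    (⋃ h ∈ Finset.Icc hmin (-1 : ℤ), ⋃ (hh : h < 0), gen h hh) ∪
      (⋃ h ∈ Finset.range (hmax.toNat + 1), toR '' A (h : ℤ) + ((h : ℕ) : ℝ) • F0)
    with hTdef
  have hTfin : T.Finite := by
    refine Set.Finite.union ?_ ?_
    · refine Set.Finite.biUnion (Finset.finite_toSet _) fun h _ => ?_
      by_cases hh : h < 0
      · simpa [hh] using hgenfin h hh
      · simp [hh]
    · refine Set.Finite.biUnion (Finset.finite_toSet _) fun h _ => ?_
      exact Set.Finite.add ((hAfin _).image toR) (hF0fin.smul_set)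
  -- `conv T` sits inside the mutation along `G'`
  have hTsub : convexHull ℝ T ⊆ mutation w F G' P := by
    refine convexHull_min ?_ (convex_convexHull ℝ _)
    rintro y (hy | hy)
    · simp only [Set.mem_iUnion] at hy
      obtain ⟨h, _, hh, hy⟩ := hy
      exact subset_convexHull ℝ _ (Set.mem_union_left _
        (Set.mem_iUnion₂.mpr ⟨h, hh, hgensub h hh hy⟩))
    · simp only [Set.mem_iUnion] at hy
      obtain ⟨h, _, hy⟩ := hy
      refine subset_convexHull ℝ _ (Set.mem_union_right _ (Set.mem_iUnion.mpr ⟨h, ?_⟩))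
      refine Set.add_subset_add (subset_convexHull ℝ _) ?_ hy
      exact Set.smul_set_mono (hFS ▸ subset_convexHull ℝ _)
  -- each `G' h` is inside `conv T`
  have hG'sub : ∀ h : ℤ, h < 0 → G' h ⊆ convexHull ℝ T := by
    intro h hh y hy
    have hmem : hmin ≤ h := (hGht G' hG' h hh y hy).2
    have hsub : gen h hh ⊆ T := by
      intro z hz
      refine Set.mem_union_left _ (Set.mem_biUnion ?_ (Set.mem_iUnion.mpr ⟨hh, hz⟩))
      exact Finset.mem_Icc.mpr ⟨hmem, by omega⟩
    exact convexHull_mono hsub (hgenhull h hh hy)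
  -- each top piece is inside `conv T`
  have hslicesub : ∀ h : ℕ, heightSlice w (h : ℤ) P + ((h : ℕ) : ℝ) • F ⊆ convexHull ℝ T := by
    intro h
    by_cases hA : (A (h : ℤ)).Nonempty
    · have hle : (h : ℤ) ≤ hmax := (hAle _ hA).2
      have hsub : toR '' A (h : ℤ) + ((h : ℕ) : ℝ) • F0 ⊆ T := by
        intro z hz
        refine Set.mem_union_right _ (Set.mem_biUnion ?_ hz)
        exact Finset.mem_range.mpr (by omega)
      have hsliceA : heightSlice w (h : ℤ) P = convexHull ℝ (toR '' A (h : ℤ)) := rfl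
      have heq : heightSlice w (h : ℤ) P + ((h : ℕ) : ℝ) • F =
          convexHull ℝ (toR '' A (h : ℤ) + ((h : ℕ) : ℝ) • F0) := by
        rw [hsliceA, hFS, ← convexHull_smul, ← convexHull_add]
      rw [heq]
      exact convexHull_mono hsub
    · have hAe : A (h : ℤ) = ∅ := Set.not_nonempty_iff_eq_empty.mp hA
      have hsliceA : heightSlice w (h : ℤ) P = convexHull ℝ (toR '' A (h : ℤ)) := rfl
      rw [hsliceA, hAe]
      simp
  -- `P` is the convex hull of its extreme points
  have hEPsub : Set.extremePoints ℝ P ⊆ toR '' ↑S := hPS ▸ extremePoints_convexHull_subset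
  have hEP : P = convexHull ℝ (Set.extremePoints ℝ P) := by
    have hfin : (Set.extremePoints ℝ P).Finite := ((S.finite_toSet.image toR)).subset hEPsub
    have hKM := closure_convexHull_extremePoints hPcomp hPconv
    rw [IsClosed.closure_eq (hfin.isCompact_convexHull ℝ).isClosed] at hKM
    exact hKM.symm
  -- the key claim: each `G h` is inside `conv T`
  have hGsub : ∀ h : ℤ, h < 0 → G h ⊆ convexHull ℝ T := by
    intro h hh x hx
    by_contra hxT
    obtain ⟨l, u, hu1, hu2⟩ := geometric_hahn_banach_closed_point
      (convex_convexHull ℝ T) (hTfin.isCompact_convexHull ℝ).isClosed hxT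
    have hFcomp : IsCompact F := hFS ▸ hF0fin.isCompact_convexHull ℝ
    obtain ⟨f0, hf0F, hf0max⟩ := hFcomp.exists_isMaxOn hFne l.continuous.continuousOn
    set c : ℝ := l f0 with hcdef
    set L : RVec d → ℝ := fun y => l y + c * pairR w y with hLdef
    have hLlin : IsLinearMap ℝ L := by
      constructor
      · intro a b; simp only [hLdef, map_add, pairR_add]; ring
      · intro r a; simp only [hLdef, map_smul, pairR_smul, smul_eq_mul]; ring
    have hkey : ∀ v ∈ Set.extremePoints ℝ P, L v < u := by
      intro v hv
      obtain ⟨uv, huvS, huvr⟩ := hEPsub hv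
      have hht : pairR w v = ((∑ i, w i * uv i : ℤ) : ℝ) := by
        rw [← huvr, pairR_toR]
      set hvz : ℤ := ∑ i, w i * uv i with hvzdef
      rcases lt_or_ge hvz 0 with hneg | hpos
      · have hmem : v ∈ G' hvz + (-hvz : ℝ) • F := (hG' hvz hneg).2.1 ⟨hv, hht⟩
        obtain ⟨g, hg, z, hzmem, hsum⟩ := hmem
        obtain ⟨f', hf', rfl⟩ := hzmem
        have hLg : l g < u := hu1 _ (hG'sub hvz hneg hg)
        have hfle : l f' ≤ c := hf0max hf'
        have hlv : l v = l g + (-hvz : ℝ) * l f' := by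
          rw [← hsum]
          simp [map_add, map_smul, smul_eq_mul]
        have hcomp : L v = l g + (-hvz : ℝ) * l f' + c * (hvz : ℝ) := by
          rw [hLdef]
          simp only
          rw [hlv, hht]
        have hbnd : (-hvz : ℝ) * l f' ≤ (-hvz : ℝ) * c := by
          apply mul_le_mul_of_nonneg_left hfle
          have : (0:ℝ) < (-hvz : ℝ) := by exact_mod_cast Int.neg_pos.mpr hneg
          linarith
        calc L v = l g + (-hvz : ℝ) * l f' + c * (hvz : ℝ) := hcomp
          _ ≤ l g + (-hvz : ℝ) * c + c * (hvz : ℝ) := by linarith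
          _ = l g := by ring
          _ < u := hLg
      · set n : ℕ := hvz.toNat with hndef
        have hn : (n : ℤ) = hvz := Int.toNat_of_nonneg hpos
        have hvA : uv ∈ A (n : ℤ) := by
          refine ⟨huvr ▸ hv.1, ?_⟩
          rw [pairR_toR, ← hvzdef, ← hn]
        have hz : v + ((n : ℕ) : ℝ) • f0 ∈ heightSlice w (n : ℤ) P + ((n : ℕ) : ℝ) • F := by
          refine Set.add_mem_add ?_ (Set.smul_mem_smul_set hf0F)
          exact subset_convexHull ℝ _ ⟨uv, hvA, huvr⟩
        have hlt : l (v + ((n : ℕ) : ℝ) • f0) < u := hu1 _ (hslicesub n hz)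
        have hcomp : L v = l (v + ((n : ℕ) : ℝ) • f0) := by
          rw [hLdef]
          simp only [map_add, map_smul, smul_eq_mul, hht, ← hn, ← hcdef]
          push_cast
          ring
        rw [hcomp]
        exact hlt
    have hPL : ∀ y ∈ P, L y < u := by
      intro y hy
      have hsub : P ⊆ {y | L y < u} :=
        hEP ▸ convexHull_min hkey (convex_halfSpace_lt hLlin u)
      exact hsub hy
    have hxht : pairR w x = (h : ℝ) := (hGht G hG h hh x hx).1
    have hz0P : x + (-h : ℝ) • f0 ∈ P :=
      slice_subset w h hPconv ((hG h hh).2.2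
        (Set.add_mem_add hx (Set.smul_mem_smul_set hf0F)))
    have hlt := hPL _ hz0P
    have hcomp : L (x + (-h : ℝ) • f0) = l x := by
      rw [hLdef]
      simp only [map_add, map_smul, smul_eq_mul, pairR_add, pairR_smul, hxht,
        hF0 f0 hf0F]
      ring
    rw [hcomp] at hlt
    linarith
  -- conclude
  refine convexHull_min ?_ (convex_convexHull ℝ _)
  rintro y (hy | hy)
  · simp only [Set.mem_iUnion] at hy
    obtain ⟨h, hh, hy⟩ := hy
    exact hTsub (hGsub h hh hy)
  · exact subset_convexHull ℝ _ (Set.mem_union_right _ hy)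

end Main

/-- The combinatorial mutation of a lattice polytope is independent of the choice of
the polytopes `{G_h}`: if `{G_h}` and `{G'_h}` both satisfy the defining sandwich
condition, then the resulting mutated polytopes coincide. -/
theorem mutation_independent_of_witness {d : ℕ} (P : Set (RVec d))
    (hP : IsLatticePolytope P) (w : Fin d → ℤ) (hw : IsPrimitive w)
    (F : Set (RVec d)) (hF : IsFactorShape w F)
    (G G' : ℤ → Set (RVec d))
    (hG : IsMutationWitness w F G P) (hG' : IsMutationWitness w F G' P) :
    mutation w F G P = mutation w F G' P :=
  Set.Subset.antisymm (mutation_subset P hP w F hF G G' hG hG')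
    (mutation_subset P hP w F hF G' G hG' hG)
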